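/- Let D = ℂ(x)[τ] be the skew polynomial ring with τ·f(x) = f(x+1)·τ. For difference operators L₁, L₂ ∈ D, L₁ is a right factor of L₂ (i.e., L₂ = Q·L₁ for some Q ∈ D) if and only if V(L₁) ⊆ V(L₂), where V(L) denotes the solution space of L in the sequence space S. -/

import Mathlib

open Polynomial

noncomputable section

/-- The ring of complex-valued sequences. -/
abbrev CSeq := ℕ → ℂ

/-- The ideal of sequences that are nonzero at only finitely many indices. -/
def finIdeal : Ideal CSeq where
  carrier := {u | (Function.support u).Finite}
  add_mem' := by
    intro u v hu hv
    exact (hu.union hv).subset (Function.support_add _ _)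
  zero_mem' := by simp [Function.support_zero]
  smul_mem' := by
    intro c u hu
    refine hu.subset ?_
    intro x hx
    simp only [Function.mem_support] at hx ⊢
    intro h0
    exact hx (by simp [Pi.smul_apply, smul_eq_mul, h0])

/-- `S = ℂ^ℕ/∼`, sequences modulo those with finite support. -/
abbrev SeqQ := CSeq ⧸ finIdeal

/-- The shift on sequences. -/
def shiftHom : CSeq →+* CSeq where
  toFun u := fun n => u (n + 1)
  map_one' := rfl
  map_mul' _ _ := rfl
  map_zero' := rfl
  map_add' _ _ := rfl

lemma shift_mem (u : CSeq) (hu : u ∈ finIdeal) : shiftHom u ∈ finIdeal := by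
  have : Function.support (shiftHom u) ⊆ (fun n => n + 1) ⁻¹' Function.support u := by
    intro x hx; exact hx
  exact (hu.preimage (fun a _ b _ h => by omega)).subset this

/-- The shift operator `τ` on `S`, as a ring homomorphism. -/
def tauHom : SeqQ →+* SeqQ :=
  Ideal.Quotient.lift finIdeal ((Ideal.Quotient.mk finIdeal).comp shiftHom)
    (fun u hu => by
      show Ideal.Quotient.mk finIdeal (shiftHom u) = 0
      exact Ideal.Quotient.eq_zero_iff_mem.mpr (shift_mem u hu))

/-- The shift operator `τ` on `S`, as a `ℂ`-linear endomorphism. -/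
def tauL : Module.End ℂ SeqQ where
  toFun := tauHom
  map_add' := map_add _
  map_smul' c x := by
    obtain ⟨u, rfl⟩ := Ideal.Quotient.mk_surjective x
    rfl

/-- Evaluation of a rational function along `ℕ` (junk value `0` at poles). -/
def evalRF (f : RatFunc ℂ) : CSeq := fun n => f.eval (RingHom.id ℂ) (n : ℂ)

/-- The image of a rational function in `S`. -/
def embRF (f : RatFunc ℂ) : SeqQ := Ideal.Quotient.mk _ (evalRF f)

/-- Multiplication by (the image in `S` of) a rational function. -/
def mulOp (f : RatFunc ℂ) : Module.End ℂ SeqQ := LinearMap.mulLeft ℂ (embRF f)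

/-- The substitution `x ↦ x + 1` on rational functions. -/
def sigmaRF (f : RatFunc ℂ) : RatFunc ℂ :=
  algebraMap (Polynomial ℂ) (RatFunc ℂ) (f.num.comp (X + 1)) /
    algebraMap (Polynomial ℂ) (RatFunc ℂ) (f.denom.comp (X + 1))

/-- The difference operator `Σ aᵢ τ^i` acting on `S`. -/
def applyOp {n : ℕ} (a : Fin (n + 1) → RatFunc ℂ) : Module.End ℂ SeqQ :=
  ∑ i : Fin (n + 1), mulOp (a i) * tauL ^ (i : ℕ)

/-- The elements of `End(S)` that are difference operators, i.e. members of `D = ℂ(x)[τ]`. -/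
def IsDiffOp (L : Module.End ℂ SeqQ) : Prop :=
  ∃ (n : ℕ) (a : Fin (n + 1) → RatFunc ℂ), L = applyOp a

namespace Stmt2Aux

open Filter Finset

local notation "M" => Ideal.Quotient.mk finIdeal

lemma mk_eq_mk_of_finite {u v : CSeq} (h : {x | u x ≠ v x}.Finite) :
    M u = M v := by
  rw [Ideal.Quotient.mk_eq_mk_iff_sub_mem]
  have hs : Function.support (u - v) = {x | u x ≠ v x} := by
    ext x; simp [Function.mem_support, sub_ne_zero]
  show Function.support (u - v) |>.Finite
  rw [hs]; exact h

lemma mk_eq_zero_of_finite {u : CSeq} (h : {x | u x ≠ 0}.Finite) : M u = 0 :=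
  Ideal.Quotient.eq_zero_iff_mem.mpr h

lemma finite_nat_roots {p : Polynomial ℂ} (hp : p ≠ 0) :
    {x : ℕ | p.eval (x : ℂ) = 0}.Finite := by
  have h : {x : ℕ | p.eval (x : ℂ) = 0} = (Nat.cast : ℕ → ℂ) ⁻¹' {z | p.IsRoot z} := rfl
  rw [h]
  exact (Polynomial.finite_setOf_isRoot hp).preimage Nat.cast_injective.injOn

lemma cofinite_to_bound {P : ℕ → Prop} (h : ∀ᶠ x in cofinite, P x) :
    ∃ B, ∀ x ≥ B, P x := by
  rw [Nat.cofinite_eq_atTop, eventually_atTop] at h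
  exact h

lemma evalRF_eq (f : RatFunc ℂ) (x : ℕ) :
    evalRF f x = f.num.eval (x : ℂ) / f.denom.eval (x : ℂ) := rfl

lemma ev_denom_ne (f : RatFunc ℂ) :
    ∀ᶠ x : ℕ in cofinite, f.denom.eval (x : ℂ) ≠ 0 :=
  (finite_nat_roots (RatFunc.denom_ne_zero f)).eventually_cofinite_notMem

lemma ev_nonzero {f : RatFunc ℂ} (hf : f ≠ 0) :
    ∀ᶠ x : ℕ in cofinite, evalRF f x ≠ 0 := by
  filter_upwards [ev_denom_ne f,
    (finite_nat_roots (RatFunc.num_ne_zero hf)).eventually_cofinite_notMem] with x hd hn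
  rw [evalRF_eq]
  exact div_ne_zero hn hd

lemma ev_add (f g : RatFunc ℂ) :
    ∀ᶠ x : ℕ in cofinite, evalRF (f + g) x = evalRF f x + evalRF g x := by
  filter_upwards [ev_denom_ne f, ev_denom_ne g] with x hf hg
  have hf' : Polynomial.eval₂ (RingHom.id ℂ) (x:ℂ) f.denom ≠ 0 := hf
  have hg' : Polynomial.eval₂ (RingHom.id ℂ) (x:ℂ) g.denom ≠ 0 := hg
  exact RatFunc.eval_add (f := RingHom.id ℂ) (a := (x:ℂ)) hf' hg'

lemma ev_mul (f g : RatFunc ℂ) :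
    ∀ᶠ x : ℕ in cofinite, evalRF (f * g) x = evalRF f x * evalRF g x := by
  filter_upwards [ev_denom_ne f, ev_denom_ne g] with x hf hg
  have hf' : Polynomial.eval₂ (RingHom.id ℂ) (x:ℂ) f.denom ≠ 0 := hf
  have hg' : Polynomial.eval₂ (RingHom.id ℂ) (x:ℂ) g.denom ≠ 0 := hg
  exact RatFunc.eval_mul (f := RingHom.id ℂ) (a := (x:ℂ)) hf' hg'

lemma evalRF_zero (x : ℕ) : evalRF 0 x = 0 := by
  simp [evalRF]

end Stmt2Aux
namespace Stmt2Aux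
open Filter Finset Polynomial

lemma comp_X_add_one_ne_zero {p : Polynomial ℂ} (hp : p ≠ 0) : p.comp (X + 1) ≠ 0 := by
  intro h
  apply hp
  have h2 : (p.comp (X + 1)).comp (X - 1) = p := by
    rw [Polynomial.comp_assoc]
    have : (X + 1 : Polynomial ℂ).comp (X - 1) = X := by
      simp [Polynomial.add_comp]
    rw [this, Polynomial.comp_X]
  rw [h, Polynomial.zero_comp] at h2
  exact h2.symm

lemma ev_shift {P : ℕ → Prop} (k : ℕ) (h : ∀ᶠ x : ℕ in cofinite, P x) :
    ∀ᶠ x : ℕ in cofinite, P (x + k) := by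
  rw [Nat.cofinite_eq_atTop, eventually_atTop] at h ⊢
  obtain ⟨B, hB⟩ := h
  exact ⟨B, fun x hx => hB _ (le_trans hx (Nat.le_add_right _ _))⟩

lemma sigmaRF_zero : sigmaRF 0 = 0 := by
  unfold sigmaRF
  simp [RatFunc.num_zero]

lemma ev_sigma (f : RatFunc ℂ) :
    ∀ᶠ x : ℕ in cofinite, evalRF (sigmaRF f) x = evalRF f (x + 1) := by
  by_cases hf : f = 0
  · subst hf
    rw [sigmaRF_zero]
    exact Eventually.of_forall fun x => by simp [evalRF_zero]
  set p := f.num.comp (X + 1) with hp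
  set q := f.denom.comp (X + 1) with hqdef
  have hq : q ≠ 0 := comp_X_add_one_ne_zero (RatFunc.denom_ne_zero f)
  have hqmap : algebraMap (Polynomial ℂ) (RatFunc ℂ) q ≠ 0 :=
    RatFunc.algebraMap_ne_zero hq
  have key : sigmaRF f * algebraMap (Polynomial ℂ) (RatFunc ℂ) q
      = algebraMap (Polynomial ℂ) (RatFunc ℂ) p := by
    unfold sigmaRF
    rw [← hp, ← hqdef, div_mul_cancel₀ _ hqmap]
  have hdvd : (sigmaRF f).denom ∣ q := by
    rw [RatFunc.denom_dvd hq]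
    exact ⟨p, rfl⟩
  obtain ⟨e, he⟩ := hdvd
  filter_upwards [(finite_nat_roots hq).eventually_cofinite_notMem] with x hx
  have hx' : q.eval (x : ℂ) ≠ 0 := hx
  have hden : (sigmaRF f).denom.eval (x : ℂ) ≠ 0 := by
    intro h0
    apply hx'
    rw [he, Polynomial.eval_mul, h0, zero_mul]
  have e1 : RatFunc.eval (RingHom.id ℂ) (x : ℂ)
        (sigmaRF f * algebraMap (Polynomial ℂ) (RatFunc ℂ) q)
      = RatFunc.eval (RingHom.id ℂ) (x : ℂ) (sigmaRF f) * q.eval (x : ℂ) := by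
    have hd1 : Polynomial.eval₂ (RingHom.id ℂ) (x : ℂ)
        (RatFunc.denom (algebraMap (Polynomial ℂ) (RatFunc ℂ) q)) ≠ 0 := by
      rw [RatFunc.denom_algebraMap]
      simp
    have hd2 : Polynomial.eval₂ (RingHom.id ℂ) (x : ℂ) (sigmaRF f).denom ≠ 0 := hden
    rw [RatFunc.eval_mul (f := RingHom.id ℂ) (a := (x : ℂ)) hd2 hd1]
    congr 1
    rw [RatFunc.eval_algebraMap]
    rfl
  rw [key] at e1
  have e2 : RatFunc.eval (RingHom.id ℂ) (x : ℂ)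
      (algebraMap (Polynomial ℂ) (RatFunc ℂ) p) = p.eval (x : ℂ) := by
    rw [RatFunc.eval_algebraMap]; rfl
  rw [e2] at e1
  have e3 : evalRF (sigmaRF f) x = p.eval (x : ℂ) / q.eval (x : ℂ) := by
    rw [evalRF]
    rw [eq_div_iff hx']
    exact e1.symm
  rw [e3, evalRF_eq]
  have hcast : ((x + 1 : ℕ) : ℂ) = (x : ℂ) + 1 := by push_cast; ring
  rw [hcast, hp, hqdef]
  simp [Polynomial.eval_comp]

lemma sigma_ne_zero {f : RatFunc ℂ} (hf : f ≠ 0) : sigmaRF f ≠ 0 := by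
  intro h
  have h1 := ev_sigma f
  have h2 := ev_shift 1 (ev_nonzero hf)
  have := (h1.and h2).exists
  obtain ⟨x, hx1, hx2⟩ := this
  rw [h] at hx1
  rw [evalRF_zero] at hx1
  exact hx2 hx1.symm

lemma sigma_iter_ne_zero (i : ℕ) {f : RatFunc ℂ} (hf : f ≠ 0) : sigmaRF^[i] f ≠ 0 := by
  induction i with
  | zero => simpa
  | succ i ih =>
    rw [Function.iterate_succ_apply']
    exact sigma_ne_zero ih

lemma ev_sigma_iter (i : ℕ) (f : RatFunc ℂ) :
    ∀ᶠ x : ℕ in cofinite, evalRF (sigmaRF^[i] f) x = evalRF f (x + i) := by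
  induction i with
  | zero => exact Eventually.of_forall fun x => by simp
  | succ i ih =>
    have h1 : ∀ᶠ x : ℕ in cofinite, evalRF (sigmaRF^[i+1] f) x = evalRF (sigmaRF^[i] f) (x+1) := by
      rw [Function.iterate_succ_apply']
      exact ev_sigma _
    filter_upwards [h1, ev_shift 1 ih] with x e1 e2
    rw [e1, e2]
    congr 1
    omega

end Stmt2Aux
namespace Stmt2Aux
open Filter Finset

local notation "M" => Ideal.Quotient.mk finIdeal

lemma tauL_mk (u : CSeq) : tauL (M u) = M (fun x => u (x + 1)) := rfl

lemma tauL_pow_mk (i : ℕ) : ∀ u : CSeq, (tauL ^ i) (M u) = M (fun x => u (x + i)) := by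
  induction i with
  | zero => intro u; rw [pow_zero]; rfl
  | succ i ih =>
    intro u
    rw [pow_succ, Module.End.mul_apply, tauL_mk, ih]
    rfl

lemma mulOp_mk (f : RatFunc ℂ) (u : CSeq) :
    mulOp f (M u) = M (fun x => evalRF f x * u x) := by
  rw [mulOp, LinearMap.mulLeft_apply, embRF, ← map_mul]
  rfl

lemma embRF_congr {f g : RatFunc ℂ}
    (h : ∀ᶠ x : ℕ in cofinite, evalRF f x = evalRF g x) : embRF f = embRF g :=
  mk_eq_mk_of_finite h

lemma embRF_add (f g : RatFunc ℂ) : embRF (f + g) = embRF f + embRF g := by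
  rw [show embRF f + embRF g = M (evalRF f + evalRF g) from (map_add _ _ _).symm]
  exact mk_eq_mk_of_finite (by filter_upwards [ev_add f g] with x h; exact h)

lemma embRF_mul (f g : RatFunc ℂ) : embRF (f * g) = embRF f * embRF g := by
  rw [show embRF f * embRF g = M (evalRF f * evalRF g) from (map_mul _ _ _).symm]
  exact mk_eq_mk_of_finite (by filter_upwards [ev_mul f g] with x h; exact h)

lemma embRF_zero : embRF 0 = 0 := by
  rw [embRF, show evalRF 0 = 0 from funext evalRF_zero, map_zero]

lemma mulOp_add (f g : RatFunc ℂ) : mulOp (f + g) = mulOp f + mulOp g := by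
  refine LinearMap.ext fun v => ?_
  rw [LinearMap.add_apply, mulOp, mulOp, mulOp, LinearMap.mulLeft_apply,
    LinearMap.mulLeft_apply, LinearMap.mulLeft_apply, embRF_add, add_mul]

lemma mulOp_mul (f g : RatFunc ℂ) : mulOp (f * g) = mulOp f * mulOp g := by
  refine LinearMap.ext fun v => ?_
  rw [Module.End.mul_apply, mulOp, mulOp, mulOp, LinearMap.mulLeft_apply,
    LinearMap.mulLeft_apply, LinearMap.mulLeft_apply, embRF_mul, mul_assoc]

lemma mulOp_zero : mulOp 0 = 0 := by
  refine LinearMap.ext fun v => ?_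
  rw [mulOp, LinearMap.mulLeft_apply, embRF_zero, zero_mul, LinearMap.zero_apply]

lemma mulOp_neg (f : RatFunc ℂ) : mulOp (-f) = - mulOp f := by
  have := mulOp_add f (-f)
  rw [add_neg_cancel, mulOp_zero] at this
  exact eq_neg_of_add_eq_zero_right this.symm

end Stmt2Aux
namespace Stmt2Aux
open Filter Finset

local notation "M" => Ideal.Quotient.mk finIdeal

lemma mk_eq_mk_of_ev {u v : CSeq} (h : ∀ᶠ x : ℕ in cofinite, u x = v x) : M u = M v :=
  mk_eq_mk_of_finite (Filter.eventually_cofinite.mp h)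

lemma mk_eq_zero_of_ev {u : CSeq} (h : ∀ᶠ x : ℕ in cofinite, u x = 0) : M u = 0 :=
  mk_eq_zero_of_finite (Filter.eventually_cofinite.mp h)

lemma tau_mulOp (f : RatFunc ℂ) : tauL * mulOp f = mulOp (sigmaRF f) * tauL := by
  refine LinearMap.ext fun v => ?_
  obtain ⟨u, rfl⟩ := Ideal.Quotient.mk_surjective v
  rw [Module.End.mul_apply, Module.End.mul_apply, mulOp_mk, tauL_mk, tauL_mk, mulOp_mk]
  refine mk_eq_mk_of_ev ?_
  filter_upwards [ev_sigma f] with x h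
  rw [h]

lemma tau_pow_mulOp (k : ℕ) : ∀ f : RatFunc ℂ,
    tauL ^ k * mulOp f = mulOp (sigmaRF^[k] f) * tauL ^ k := by
  induction k with
  | zero => intro f; simp
  | succ k ih =>
    intro f
    rw [pow_succ, mul_assoc, tau_mulOp, ← mul_assoc, ih (sigmaRF f),
      ← Function.iterate_succ_apply, mul_assoc, ← pow_succ]

/-- `Σ_{i<N} c_i τ^i` -/
def applyN (N : ℕ) (c : ℕ → RatFunc ℂ) : Module.End ℂ SeqQ :=
  ∑ i ∈ Finset.range N, mulOp (c i) * tauL ^ i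

lemma applyN_mk (N : ℕ) (c : ℕ → RatFunc ℂ) (u : CSeq) :
    applyN N c (M u) = M (fun x => ∑ i ∈ Finset.range N, evalRF (c i) x * u (x + i)) := by
  rw [applyN, LinearMap.sum_apply]
  have h : ∀ i ∈ Finset.range N,
      (mulOp (c i) * tauL ^ i) (M u) = M (fun x => evalRF (c i) x * u (x + i)) := by
    intro i _
    rw [Module.End.mul_apply, tauL_pow_mk, mulOp_mk]
  rw [Finset.sum_congr rfl h, ← map_sum]
  congr 1
  ext x
  rw [Finset.sum_apply]

lemma applyOp_eq_applyN {n : ℕ} (a : Fin (n + 1) → RatFunc ℂ) :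
    applyOp a = applyN (n + 1) (fun i => if h : i < n + 1 then a ⟨i, h⟩ else 0) := by
  rw [applyOp, applyN, ← Fin.sum_univ_eq_sum_range]
  refine Finset.sum_congr rfl fun i _ => ?_
  rw [dif_pos i.isLt]

lemma applyN_congr (N : ℕ) {c d : ℕ → RatFunc ℂ} (h : ∀ i < N, c i = d i) :
    applyN N c = applyN N d := by
  unfold applyN
  exact Finset.sum_congr rfl fun i hi => by rw [h i (Finset.mem_range.mp hi)]

lemma applyN_add (N : ℕ) (c d : ℕ → RatFunc ℂ) :
    applyN N (fun i => c i + d i) = applyN N c + applyN N d := by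
  unfold applyN
  rw [← Finset.sum_add_distrib]
  exact Finset.sum_congr rfl fun i _ => by rw [mulOp_add, add_mul]

lemma applyN_sub (N : ℕ) (c d : ℕ → RatFunc ℂ) :
    applyN N (fun i => c i - d i) = applyN N c - applyN N d := by
  have h := applyN_add N (fun i => c i - d i) d
  have h2 : (fun i => (c i - d i) + d i) = c := by ext i; ring
  rw [h2] at h
  rw [h]
  abel

lemma applyN_pad {N N' : ℕ} (hNN : N ≤ N') (c : ℕ → RatFunc ℂ) (hc : ∀ i, N ≤ i → c i = 0) :
    applyN N' c = applyN N c := by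
  unfold applyN
  refine (Finset.sum_subset (Finset.range_subset_range.mpr hNN) fun i _ hi => ?_).symm
  rw [hc i (by simpa using hi), mulOp_zero, zero_mul]

/-- remainder-style truncation -/
def trunc (N : ℕ) (c : ℕ → RatFunc ℂ) : ℕ → RatFunc ℂ := fun i => if i < N then c i else 0

lemma applyN_trunc (N : ℕ) (c : ℕ → RatFunc ℂ) : applyN N (trunc N c) = applyN N c :=
  applyN_congr N fun i hi => by rw [trunc, if_pos hi]

lemma single_op (d : RatFunc ℂ) (s : ℕ) :
    mulOp d * tauL ^ s = applyN (s + 1) (fun i => if i = s then d else 0) := by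
  unfold applyN
  have h : ∀ i ∈ Finset.range (s + 1), mulOp (if i = s then d else 0) * tauL ^ i
      = if i = s then mulOp d * tauL ^ s else 0 := by
    intro i hi
    by_cases h : i = s
    · subst h; rw [if_pos rfl, if_pos rfl]
    · rw [if_neg h, if_neg h, mulOp_zero, zero_mul]
  rw [Finset.sum_congr rfl h,
    Finset.sum_ite_eq' (Finset.range (s + 1)) s (fun _ => mulOp d * tauL ^ s),
    if_pos (Finset.self_mem_range_succ s)]

end Stmt2Aux
namespace Stmt2Aux
open Filter Finset

/-- coefficients of `(d τ^s) ∘ (Σ c_i τ^i)` -/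
def shiftC (s : ℕ) (d : RatFunc ℂ) (c : ℕ → RatFunc ℂ) : ℕ → RatFunc ℂ :=
  fun j => if s ≤ j then d * sigmaRF^[s] (c (j - s)) else 0

lemma mul_applyN (d : RatFunc ℂ) (s N : ℕ) (c : ℕ → RatFunc ℂ) :
    mulOp d * tauL ^ s * applyN N c = applyN (s + N) (shiftC s d c) := by
  rw [applyN, Finset.mul_sum]
  have h1 : ∀ i ∈ Finset.range N, mulOp d * tauL ^ s * (mulOp (c i) * tauL ^ i)
      = mulOp (d * sigmaRF^[s] (c i)) * tauL ^ (s + i) := by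
    intro i _
    rw [mul_assoc (mulOp d), ← mul_assoc (tauL ^ s), tau_pow_mulOp s (c i),
      mul_assoc, ← mul_assoc (mulOp d), ← mulOp_mul, ← pow_add]
  rw [Finset.sum_congr rfl h1, applyN, Finset.sum_range_add]
  have h2 : ∑ i ∈ Finset.range s, mulOp (shiftC s d c i) * tauL ^ i = 0 := by
    refine Finset.sum_eq_zero fun i hi => ?_
    rw [shiftC]
    rw [if_neg (by simp at hi; omega), mulOp_zero, zero_mul]
  rw [h2, zero_add]
  refine Finset.sum_congr rfl fun i _ => ?_
  rw [shiftC]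
  rw [if_pos (Nat.le_add_right s i), Nat.add_sub_cancel_left]

/-- `D` membership in `applyN` form. -/
def IsDiffOpN (L : Module.End ℂ SeqQ) : Prop := ∃ N c, L = applyN N c

lemma isDiffOpN_zero : IsDiffOpN 0 := ⟨0, fun _ => 0, by rw [applyN]; simp⟩

lemma isDiffOpN_add {L L' : Module.End ℂ SeqQ} (h : IsDiffOpN L) (h' : IsDiffOpN L') :
    IsDiffOpN (L + L') := by
  obtain ⟨N, c, rfl⟩ := h
  obtain ⟨N', c', rfl⟩ := h'
  refine ⟨max N N', fun i => trunc N c i + trunc N' c' i, ?_⟩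
  rw [applyN_add]
  have p1 : applyN (max N N') (trunc N c) = applyN N c := by
    rw [applyN_pad (le_max_left N N') _ (fun i hi => by rw [trunc, if_neg (by omega)]),
      applyN_trunc]
  have p2 : applyN (max N N') (trunc N' c') = applyN N' c' := by
    rw [applyN_pad (le_max_right N N') _ (fun i hi => by rw [trunc, if_neg (by omega)]),
      applyN_trunc]
  rw [p1, p2]

lemma isDiffOpN_iff (L : Module.End ℂ SeqQ) : IsDiffOpN L ↔ _root_.IsDiffOp L := by
  constructor
  · rintro ⟨N, c, rfl⟩
    cases N with
    | zero =>
      refine ⟨0, fun _ => 0, ?_⟩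
      have h1 : applyN 0 c = 0 := by simp [applyN]
      have h2 : applyOp (fun _ : Fin 1 => (0 : RatFunc ℂ)) = 0 := by
        simp [applyOp, mulOp_zero]
      rw [h1, h2]
    | succ K =>
      refine ⟨K, fun i => c i, ?_⟩
      rw [applyOp_eq_applyN]
      exact (applyN_congr _ fun i hi => by rw [dif_pos hi]).symm
  · rintro ⟨n, a, rfl⟩
    exact ⟨n + 1, _, applyOp_eq_applyN a⟩

end Stmt2Aux
namespace Stmt2Aux
open Filter Finset

lemma applyN_succ (N : ℕ) (c : ℕ → RatFunc ℂ) :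
    applyN (N + 1) c = applyN N c + mulOp (c N) * tauL ^ N := by
  rw [applyN, applyN, Finset.sum_range_succ]

/-- ℕ-extension of `Fin (n+1)` coefficients -/
def extC {n : ℕ} (a : Fin (n + 1) → RatFunc ℂ) : ℕ → RatFunc ℂ :=
  fun i => if h : i < n + 1 then a ⟨i, h⟩ else 0

lemma extC_last {n : ℕ} (a : Fin (n + 1) → RatFunc ℂ) : extC a n = a (Fin.last n) := by
  rw [extC, dif_pos (Nat.lt_succ_self n)]
  rfl

lemma applyOp_eq_applyN' {n : ℕ} (a : Fin (n + 1) → RatFunc ℂ) :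
    applyOp a = applyN (n + 1) (extC a) := applyOp_eq_applyN a

lemma division (n : ℕ) (a : Fin (n + 1) → RatFunc ℂ) (han : a (Fin.last n) ≠ 0) :
    ∀ N (c : ℕ → RatFunc ℂ), ∃ Q r, IsDiffOpN Q ∧
      applyN N c = Q * applyOp a + applyN n r := by
  intro N
  induction N using Nat.strong_induction_on with
  | _ N ih =>
  intro c
  by_cases hN : N ≤ n
  · refine ⟨0, trunc N c, isDiffOpN_zero, ?_⟩
    rw [zero_mul, zero_add, ← applyN_trunc N c,
      applyN_pad hN (trunc N c) (fun i hi => by rw [trunc, if_neg (by omega)])]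
  · cases N with
    | zero => omega
    | succ K =>
      have hK : n ≤ K := by omega
      set s := K - n with hs
      have hsn : s + n = K := by omega
      have haN : extC a n = a (Fin.last n) := extC_last a
      have hσ : sigmaRF^[s] (extC a n) ≠ 0 := by
        rw [haN]; exact sigma_iter_ne_zero s han
      set d := c K / sigmaRF^[s] (extC a n) with hd
      set e := shiftC s d (extC a) with he
      have key : mulOp d * tauL ^ s * applyOp a = applyN (K + 1) e := by
        rw [applyOp_eq_applyN', mul_applyN]
        congr 1
        omega
      have heK : e K = c K := by
        rw [he, shiftC]
        rw [if_pos (by omega)]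
        have : K - s = n := by omega
        rw [this, hd, div_mul_cancel₀ _ hσ]
      have hmain : applyN (K + 1) c
          = applyN K (fun i => c i - e i) + mulOp d * tauL ^ s * applyOp a := by
        rw [key, applyN_sub, applyN_succ K c, applyN_succ K e, heK]
        abel
      obtain ⟨Q, r, hQ, hr⟩ := ih K (by omega) (fun i => c i - e i)
      refine ⟨Q + mulOp d * tauL ^ s, r,
        isDiffOpN_add hQ ⟨s + 1, _, single_op d s⟩, ?_⟩
      rw [hmain, hr, add_mul]
      abel

end Stmt2Aux
namespace Stmt2Aux
open Filter Finset

/-- the solution sequence of the recurrence `Σ_{i ≤ n} g i y * u (y+i) = 0` for `y ≥ x₀`,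
with initial values `init` on `[x₀, x₀+n)` and junk `0` before `x₀`. -/
def solSeq (g : ℕ → ℕ → ℂ) (n x₀ : ℕ) (init : ℕ → ℂ) : ℕ → ℂ
  | x =>
    if _hx : x < x₀ + n then (if x₀ ≤ x then init (x - x₀) else 0)
    else
      -(∑ i ∈ (Finset.range n).attach,
          g i.1 (x - n) * solSeq g n x₀ init (x - n + i.1)) / g n (x - n)
  termination_by x => x
  decreasing_by
    have := Finset.mem_range.mp i.2
    omega

lemma solSeq_init (g : ℕ → ℕ → ℂ) (n x₀ : ℕ) (init : ℕ → ℂ) (j : ℕ) (hj : j < n) :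
    solSeq g n x₀ init (x₀ + j) = init j := by
  rw [solSeq]
  rw [dif_pos (by omega), if_pos (by omega)]
  congr 1
  omega

lemma solSeq_rec (g : ℕ → ℕ → ℂ) (n x₀ : ℕ) (init : ℕ → ℂ) (y : ℕ) (hy : x₀ ≤ y)
    (hg : g n y ≠ 0) :
    ∑ i ∈ Finset.range (n + 1), g i y * solSeq g n x₀ init (y + i) = 0 := by
  rw [Finset.sum_range_succ]
  have hstep : solSeq g n x₀ init (y + n)
      = -(∑ i ∈ Finset.range n, g i y * solSeq g n x₀ init (y + i)) / g n y := by
    rw [solSeq]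
    rw [dif_neg (by omega)]
    have h1 : y + n - n = y := by omega
    rw [h1]
    congr 1
    rw [← Finset.sum_attach (Finset.range n) (fun i => g i y * solSeq g n x₀ init (y + i))]
  rw [hstep, mul_comm, div_mul_cancel₀ _ hg, add_neg_cancel]

end Stmt2Aux
namespace Stmt2Aux
open Filter Finset

lemma forward_zero (g : ℕ → ℕ → ℂ) (k x₁ : ℕ) (w : ℕ → ℂ)
    (hrec : ∀ y, x₁ ≤ y → ∑ i ∈ Finset.range (k + 1), g i y * w (y + i) = 0)
    (hlead : ∀ y, x₁ ≤ y → g k y ≠ 0)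
    (hinit : ∀ j, j < k → w (x₁ + j) = 0) :
    ∀ x, x₁ ≤ x → w x = 0 := by
  intro x
  induction x using Nat.strong_induction_on with
  | _ x ihx =>
  intro hx
  by_cases hxk : x < x₁ + k
  · have : x = x₁ + (x - x₁) := by omega
    rw [this]
    exact hinit _ (by omega)
  · set y := x - k with hy
    have hyx : y + k = x := by omega
    have h1 := hrec y (by omega)
    rw [Finset.sum_range_succ] at h1
    have h2 : ∀ i ∈ Finset.range k, g i y * w (y + i) = 0 := by
      intro i hi
      have hik := Finset.mem_range.mp hi
      rw [ihx (y + i) (by omega) (by omega), mul_zero]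
    rw [Finset.sum_congr rfl h2, Finset.sum_const_zero, zero_add, hyx] at h1
    exact (mul_eq_zero.mp h1).resolve_left (hlead y (by omega))

lemma backward_zero (g : ℕ → ℕ → ℂ) (k x₀ : ℕ) (w : ℕ → ℂ)
    (hrec : ∀ y, x₀ ≤ y → ∑ i ∈ Finset.range (k + 1), g i y * w (y + i) = 0)
    (h0 : ∀ y, x₀ ≤ y → g 0 y ≠ 0)
    (x₁ : ℕ) (hvan : ∀ x, x₁ ≤ x → w x = 0) :
    ∀ x, x₀ ≤ x → w x = 0 := by
  have main : ∀ d x, x₀ ≤ x → x₁ ≤ x + d → w x = 0 := by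
    intro d
    induction d with
    | zero => intro x hx hxd; exact hvan x (by omega)
    | succ d ihd =>
      intro x hx hxd
      by_cases hx1 : x₁ ≤ x + d
      · exact ihd x hx hx1
      · have h1 := hrec x hx
        rw [Finset.sum_range_succ'] at h1
        have h2 : ∀ i ∈ Finset.range k, g (i + 1) x * w (x + (i + 1)) = 0 := by
          intro i hi
          rw [ihd (x + (i + 1)) (by omega) (by omega), mul_zero]
        rw [Finset.sum_congr rfl h2, Finset.sum_const_zero, zero_add] at h1
        have h3 : w (x + 0) = 0 :=
          (mul_eq_zero.mp h1).resolve_left (h0 x hx)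
        simpa using h3
  intro x hx
  exact main x₁ x hx (by omega)

end Stmt2Aux
namespace Stmt2Aux
open Filter Finset

local notation "M" => Ideal.Quotient.mk finIdeal

lemma bound_to_cofinite {P : ℕ → Prop} (h : ∃ B, ∀ x ≥ B, P x) :
    ∀ᶠ x in Filter.cofinite, P x := by
  rw [Nat.cofinite_eq_atTop, eventually_atTop]
  exact h

lemma extC_zero {n : ℕ} (a : Fin (n + 1) → RatFunc ℂ) : extC a 0 = a 0 := by
  rw [extC, dif_pos (Nat.succ_pos n)]
  rfl

lemma no_small_remainder (n : ℕ) (a : Fin (n + 1) → RatFunc ℂ)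
    (ha0 : a 0 ≠ 0) (han : a (Fin.last n) ≠ 0)
    (k : ℕ) (hk : k < n) (r : Fin (k + 1) → RatFunc ℂ) (hrk : r (Fin.last k) ≠ 0)
    (hker : LinearMap.ker (applyOp a) ≤ LinearMap.ker (applyOp r)) : False := by
  set g : ℕ → ℕ → ℂ := fun i x => evalRF (extC a i) x with hg
  set gr : ℕ → ℕ → ℂ := fun i x => evalRF (extC r i) x with hgr
  -- choose x₀ beyond zeros/poles of the leading and trailing coefficients of a
  obtain ⟨x₀, hx₀⟩ := cofinite_to_bound ((ev_nonzero han).and (ev_nonzero ha0))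
  have hgn : ∀ y, x₀ ≤ y → g n y ≠ 0 := by
    intro y hy
    rw [hg]
    simp only
    rw [extC_last]
    exact (hx₀ y hy).1
  have hg0 : ∀ y, x₀ ≤ y → g 0 y ≠ 0 := by
    intro y hy
    rw [hg]
    simp only
    rw [extC_zero]
    exact (hx₀ y hy).2
  -- the basic solutions
  set u : Fin (k + 1) → ℕ → ℂ :=
    fun j => solSeq g n x₀ (fun t => if t = (j : ℕ) then 1 else 0) with hu
  have husol : ∀ (j : Fin (k + 1)) (y : ℕ), x₀ ≤ y →
      ∑ i ∈ Finset.range (n + 1), g i y * u j (y + i) = 0 := by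
    intro j y hy
    exact solSeq_rec g n x₀ _ y hy (hgn y hy)
  have humem : ∀ j : Fin (k + 1), M (u j) ∈ LinearMap.ker (applyOp a) := by
    intro j
    rw [LinearMap.mem_ker, applyOp_eq_applyN', applyN_mk]
    refine mk_eq_zero_of_ev (bound_to_cofinite ⟨x₀, fun x hx => ?_⟩)
    exact husol j x hx
  -- each u j eventually satisfies the r-recurrence
  have hres : ∀ j : Fin (k + 1), ∃ B, ∀ x ≥ B,
      ∑ i ∈ Finset.range (k + 1), gr i x * u j (x + i) = 0 := by
    intro j
    have h1 := hker (humem j)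
    rw [LinearMap.mem_ker, applyOp_eq_applyN', applyN_mk] at h1
    have h2 : (Function.support
        (fun x => ∑ i ∈ Finset.range (k + 1), evalRF (extC r i) x * u j (x + i))).Finite :=
      Ideal.Quotient.eq_zero_iff_mem.mp h1
    refine cofinite_to_bound ?_
    filter_upwards [h2.eventually_cofinite_notMem] with x hx
    simpa [Function.mem_support] using hx
  choose Bf hBf using hres
  obtain ⟨B₂, hB₂⟩ := cofinite_to_bound (ev_nonzero hrk)
  set x₁ : ℕ := max (max x₀ B₂) (Finset.univ.sup Bf) with hx₁
  have hx₁0 : x₀ ≤ x₁ := le_trans (le_max_left _ _) (le_max_left _ _)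
  have hgrk : ∀ y, x₁ ≤ y → gr k y ≠ 0 := by
    intro y hy
    rw [hgr]
    simp only
    rw [extC_last]
    exact hB₂ y (le_trans (le_trans (le_max_right _ _) (le_max_left _ _)) hy)
  have hBf' : ∀ (j : Fin (k + 1)) (x : ℕ), x₁ ≤ x →
      ∑ i ∈ Finset.range (k + 1), gr i x * u j (x + i) = 0 := by
    intro j x hx
    exact hBf j x (le_trans (le_trans (Finset.le_sup (Finset.mem_univ j)) (le_max_right _ _)) hx)
  -- the k+1 initial-value vectors in ℂ^k are dependent
  set v : Fin (k + 1) → (Fin k → ℂ) := fun j t => u j (x₁ + (t : ℕ)) with hv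
  have hnli : ¬ LinearIndependent ℂ v := by
    intro hli
    have hle := LinearIndependent.fintype_card_le_finrank hli
    rw [Module.finrank_fintype_fun_eq_card] at hle
    simp [Fintype.card_fin] at hle
  obtain ⟨cj, hsum, j₀, hj₀⟩ := Fintype.not_linearIndependent_iff.mp hnli
  set w : ℕ → ℂ := fun x => ∑ j : Fin (k + 1), cj j * u j x with hw
  -- w satisfies the r-recurrence from x₁ on
  have hwrec : ∀ y, x₁ ≤ y → ∑ i ∈ Finset.range (k + 1), gr i y * w (y + i) = 0 := by
    intro y hy
    have hterm : ∀ i ∈ Finset.range (k + 1),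
        gr i y * w (y + i) = ∑ j : Fin (k + 1), cj j * (gr i y * u j (y + i)) := by
      intro i _
      rw [hw]
      simp only
      rw [Finset.mul_sum]
      exact Finset.sum_congr rfl fun j _ => by ring
    rw [Finset.sum_congr rfl hterm, Finset.sum_comm]
    refine Finset.sum_eq_zero fun j _ => ?_
    rw [← Finset.mul_sum, hBf' j y hy, mul_zero]
  -- w vanishes at x₁, ..., x₁+k-1
  have hwinit : ∀ t, t < k → w (x₁ + t) = 0 := by
    intro t ht
    have h1 := congrFun hsum ⟨t, ht⟩
    rw [Finset.sum_apply] at h1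
    simpa [hv, hw, Pi.smul_apply, smul_eq_mul] using h1
  have hwvan : ∀ x, x₁ ≤ x → w x = 0 :=
    forward_zero gr k x₁ w hwrec hgrk hwinit
  -- w satisfies the a-recurrence from x₀ on
  have hwarec : ∀ y, x₀ ≤ y → ∑ i ∈ Finset.range (n + 1), g i y * w (y + i) = 0 := by
    intro y hy
    have hterm : ∀ i ∈ Finset.range (n + 1),
        g i y * w (y + i) = ∑ j : Fin (k + 1), cj j * (g i y * u j (y + i)) := by
      intro i _
      rw [hw]
      simp only
      rw [Finset.mul_sum]
      exact Finset.sum_congr rfl fun j _ => by ring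
    rw [Finset.sum_congr rfl hterm, Finset.sum_comm]
    refine Finset.sum_eq_zero fun j _ => ?_
    rw [← Finset.mul_sum, husol j y hy, mul_zero]
  have hwall : ∀ x, x₀ ≤ x → w x = 0 :=
    backward_zero g n x₀ w hwarec hg0 x₁ hwvan
  -- evaluate at x₀ + j₀
  have hval : w (x₀ + (j₀ : ℕ)) = cj j₀ := by
    rw [hw]
    simp only
    have hterm : ∀ j ∈ Finset.univ, cj j * u j (x₀ + (j₀ : ℕ))
        = if j = j₀ then cj j else 0 := by
      intro j _
      rw [hu]
      simp only
      rw [solSeq_init g n x₀ _ (j₀ : ℕ) (by omega)]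
      by_cases h : j = j₀
      · subst h
        rw [if_pos rfl, if_pos rfl, mul_one]
      · rw [if_neg (fun hh : (j₀ : ℕ) = (j : ℕ) => h (Fin.ext hh.symm)), if_neg h, mul_zero]
    rw [Finset.sum_congr rfl hterm, Finset.sum_ite_eq' Finset.univ j₀ cj,
      if_pos (Finset.mem_univ j₀)]
  rw [hwall (x₀ + (j₀ : ℕ)) (Nat.le_add_right _ _)] at hval
  exact hj₀ hval.symm

end Stmt2Aux
open Stmt2Aux in
/-- `L₁` is a right factor of `L₂` iff `V(L₁) ⊆ V(L₂)`. -/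
theorem stmt2 (n m : ℕ) (a : Fin (n + 1) → RatFunc ℂ) (b : Fin (m + 1) → RatFunc ℂ)
    (ha0 : a 0 ≠ 0) (han : a (Fin.last n) ≠ 0)
    (hb0 : b 0 ≠ 0) (hbm : b (Fin.last m) ≠ 0) :
    (∃ Q : Module.End ℂ SeqQ, IsDiffOp Q ∧ applyOp b = Q * applyOp a) ↔
      LinearMap.ker (applyOp a) ≤ LinearMap.ker (applyOp b) := by
  constructor
  · rintro ⟨Q, _, hQ⟩
    intro u hu
    rw [LinearMap.mem_ker] at hu ⊢
    rw [hQ, Module.End.mul_apply, hu, map_zero]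
  · intro hker
    classical
    obtain ⟨Q, r, hQN, heq⟩ := division n a han (m + 1) (extC b)
    have hb : applyOp b = Q * applyOp a + applyN n r := by
      rw [applyOp_eq_applyN' b]; exact heq
    have hkerr : LinearMap.ker (applyOp a) ≤ LinearMap.ker (applyN n r) := by
      intro u hu
      have h1 : applyOp b u = 0 := LinearMap.mem_ker.mp (hker hu)
      rw [hb, LinearMap.add_apply, Module.End.mul_apply, LinearMap.mem_ker.mp hu,
        map_zero, zero_add] at h1
      exact LinearMap.mem_ker.mpr h1
    have hr0 : ∀ i, i < n → r i = 0 := by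
      by_contra hcon
      push_neg at hcon
      obtain ⟨i, hi, hri⟩ := hcon
      have hsne : ((Finset.range n).filter (fun i => r i ≠ 0)).Nonempty :=
        ⟨i, by simp [Finset.mem_filter, hi, hri]⟩
      obtain ⟨K, hKmem, hKmax⟩ :
          ∃ K ∈ (Finset.range n).filter (fun i => r i ≠ 0),
            ∀ x ∈ (Finset.range n).filter (fun i => r i ≠ 0), x ≤ K :=
        ⟨_, Finset.max'_mem _ hsne, fun x hx => Finset.le_max' _ x hx⟩
      rw [Finset.mem_filter, Finset.mem_range] at hKmem
      obtain ⟨hKlt, hrK⟩ := hKmem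
      have hbig : ∀ i', K < i' → i' < n → r i' = 0 := by
        intro i' hKi' hi'n
        by_contra hne
        have hmem : i' ∈ (Finset.range n).filter (fun i => r i ≠ 0) := by
          rw [Finset.mem_filter, Finset.mem_range]; exact ⟨hi'n, hne⟩
        have := hKmax i' hmem
        omega
      set r' : Fin (K + 1) → RatFunc ℂ := fun j => r (j : ℕ) with hr'
      have he1 : applyN n r = applyOp r' := by
        rw [← applyN_trunc n r,
          applyN_pad (show K + 1 ≤ n by omega) (trunc n r) (fun i hi => by
            rw [trunc]
            by_cases h2 : i < n
            · rw [if_pos h2, hbig i (by omega) h2]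
            · rw [if_neg h2]),
          applyOp_eq_applyN' r']
        refine applyN_congr _ fun i hiK => ?_
        rw [trunc, if_pos (by omega), extC, dif_pos hiK]
      have hrlast : r' (Fin.last K) = r K := rfl
      refine no_small_remainder n a ha0 han K (by omega) r' (by rw [hrlast]; exact hrK) ?_
      rw [← he1]
      exact hkerr
    have hzero : applyN n r = 0 := by
      rw [applyN]
      refine Finset.sum_eq_zero fun i hi => ?_
      rw [hr0 i (Finset.mem_range.mp hi), mulOp_zero, zero_mul]
    exact ⟨Q, (isDiffOpN_iff Q).mp hQN, by rw [hb, hzero, add_zero]⟩
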